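/- (Lemma E.2.) Let A and B be symmetric positive definite d×d real matrices with λ_min(A) > ‖B−A‖_op, where λ_min(A) is the smallest eigenvalue of A and ‖·‖_op is the operator norm induced by the Euclidean norm. Then |log det(A) − log det(B)| ≤ d·‖B−A‖_op / (λ_min(A) − ‖B−A‖_op). -/

import Mathlib

open Matrix Real

/-- The Euclidean (ℓ₂) norm of a vector in `Fin d → ℝ`. -/
noncomputable def l2norm {d : ℕ} (v : Fin d → ℝ) : ℝ :=
  Real.sqrt (v ⬝ᵥ v)

/-- The operator norm of a matrix with respect to the Euclidean norm, as the supremum of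
`‖M v‖₂` over the closed Euclidean unit ball. -/
noncomputable def opNorm {d : ℕ} (M : Matrix (Fin d) (Fin d) ℝ) : ℝ :=
  ⨆ v : {v : Fin d → ℝ // v ⬝ᵥ v ≤ 1}, l2norm (M *ᵥ (v : Fin d → ℝ))

/-- The smallest eigenvalue of a symmetric matrix, given by the Rayleigh quotient
characterization: the infimum of `vᵀ M v` over unit vectors `v`. -/
noncomputable def minEig {d : ℕ} (M : Matrix (Fin d) (Fin d) ℝ) : ℝ :=
  ⨅ v : {v : Fin d → ℝ // v ⬝ᵥ v = 1}, (v : Fin d → ℝ) ⬝ᵥ (M *ᵥ (v : Fin d → ℝ))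

lemma dp_self_nonneg {d : ℕ} (v : Fin d → ℝ) : 0 ≤ v ⬝ᵥ v :=
  Finset.sum_nonneg fun i _ => mul_self_nonneg _

lemma l2norm_nonneg {d : ℕ} (v : Fin d → ℝ) : 0 ≤ l2norm v := Real.sqrt_nonneg _

lemma l2norm_sq {d : ℕ} (v : Fin d → ℝ) : l2norm v ^ 2 = v ⬝ᵥ v :=
  Real.sq_sqrt (dp_self_nonneg v)

lemma l2norm_smul {d : ℕ} (c : ℝ) (v : Fin d → ℝ) : l2norm (c • v) = |c| * l2norm v := by
  unfold l2norm
  rw [smul_dotProduct, dotProduct_smul, smul_eq_mul, smul_eq_mul, ← mul_assoc,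
    Real.sqrt_mul (mul_self_nonneg c), Real.sqrt_mul_self_eq_abs]

lemma cauchy_schwarz {d : ℕ} (x y : Fin d → ℝ) : |x ⬝ᵥ y| ≤ l2norm x * l2norm y := by
  have h := Finset.sum_mul_sq_le_sq_mul_sq Finset.univ x y
  have h2 : (x ⬝ᵥ y) ^ 2 ≤ (l2norm x * l2norm y) ^ 2 := by
    rw [mul_pow, l2norm_sq, l2norm_sq]
    simpa [dotProduct, pow_two] using h
  calc |x ⬝ᵥ y| = Real.sqrt ((x ⬝ᵥ y) ^ 2) := (Real.sqrt_sq_eq_abs _).symm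
    _ ≤ Real.sqrt ((l2norm x * l2norm y) ^ 2) := Real.sqrt_le_sqrt h2
    _ = l2norm x * l2norm y := Real.sqrt_sq (mul_nonneg (l2norm_nonneg _) (l2norm_nonneg _))

lemma opNorm_bddAbove {d : ℕ} (M : Matrix (Fin d) (Fin d) ℝ) :
    BddAbove (Set.range fun v : {v : Fin d → ℝ // v ⬝ᵥ v ≤ 1} => l2norm (M *ᵥ (v : Fin d → ℝ))) := by
  refine ⟨Real.sqrt (∑ i, ∑ j, M i j ^ 2), ?_⟩
  rintro _ ⟨⟨v, hv⟩, rfl⟩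
  apply Real.sqrt_le_sqrt
  have : ∀ i, (M *ᵥ v) i ^ 2 ≤ ∑ j, M i j ^ 2 := by
    intro i
    calc (M *ᵥ v) i ^ 2 ≤ (∑ j, M i j ^ 2) * (∑ j, v j ^ 2) := by
          have := Finset.sum_mul_sq_le_sq_mul_sq Finset.univ (fun j => M i j) v
          simpa [Matrix.mulVec, dotProduct] using this
      _ ≤ (∑ j, M i j ^ 2) * 1 := by
          apply mul_le_mul_of_nonneg_left _ (Finset.sum_nonneg fun j _ => sq_nonneg _)
          simpa [dotProduct, pow_two] using hv
      _ = ∑ j, M i j ^ 2 := mul_one _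
  calc (M *ᵥ v) ⬝ᵥ (M *ᵥ v) = ∑ i, (M *ᵥ v) i ^ 2 := by simp [dotProduct, pow_two]
    _ ≤ ∑ i, ∑ j, M i j ^ 2 := Finset.sum_le_sum fun i _ => this i

lemma opNorm_le_unit {d : ℕ} (M : Matrix (Fin d) (Fin d) ℝ) {v : Fin d → ℝ} (hv : v ⬝ᵥ v ≤ 1) :
    l2norm (M *ᵥ v) ≤ opNorm M :=
  le_ciSup (opNorm_bddAbove M) (⟨v, hv⟩ : {v : Fin d → ℝ // v ⬝ᵥ v ≤ 1})

lemma opNorm_nonneg {d : ℕ} (M : Matrix (Fin d) (Fin d) ℝ) : 0 ≤ opNorm M :=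
  le_trans (l2norm_nonneg _) (opNorm_le_unit M (v := 0) (by simp))

lemma quad_abs_le {d : ℕ} (M : Matrix (Fin d) (Fin d) ℝ) (w : Fin d → ℝ) :
    |w ⬝ᵥ (M *ᵥ w)| ≤ opNorm M * (w ⬝ᵥ w) := by
  rcases eq_or_ne w 0 with rfl | hw
  · simp [opNorm_nonneg]
  · set t := l2norm w with ht
    have hww : 0 < w ⬝ᵥ w := (dp_self_nonneg w).lt_of_ne' (fun h => hw (dotProduct_self_eq_zero.mp h))
    have htpos : 0 < t := Real.sqrt_pos.mpr hww
    have ht2 : t ^ 2 = w ⬝ᵥ w := l2norm_sq w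
    set u : Fin d → ℝ := t⁻¹ • w with hu
    have huu : u ⬝ᵥ u ≤ 1 := by
      rw [hu, smul_dotProduct, dotProduct_smul, smul_eq_mul, smul_eq_mul, ← mul_assoc]
      rw [← ht2]; rw [pow_two]; field_simp; exact le_rfl
    have hMw : l2norm (M *ᵥ w) ≤ t * opNorm M := by
      have : w = t • u := by rw [hu, smul_smul, mul_inv_cancel₀ htpos.ne', one_smul]
      calc l2norm (M *ᵥ w) = l2norm (M *ᵥ (t • u)) := by rw [← this]
        _ = |t| * l2norm (M *ᵥ u) := by rw [mulVec_smul]; exact l2norm_smul t _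
        _ ≤ t * opNorm M := by
            rw [abs_of_pos htpos]
            exact mul_le_mul_of_nonneg_left (opNorm_le_unit M huu) htpos.le
    calc |w ⬝ᵥ (M *ᵥ w)| ≤ l2norm w * l2norm (M *ᵥ w) := cauchy_schwarz _ _
      _ ≤ t * (t * opNorm M) := mul_le_mul_of_nonneg_left hMw htpos.le
      _ = opNorm M * (w ⬝ᵥ w) := by rw [← ht2]; ring

lemma minEig_le_quad {d : ℕ} {A : Matrix (Fin d) (Fin d) ℝ} (hA : A.PosDef) (v : Fin d → ℝ) :
    minEig A * (v ⬝ᵥ v) ≤ v ⬝ᵥ (A *ᵥ v) := by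
  have hbdd : BddBelow (Set.range fun v : {v : Fin d → ℝ // v ⬝ᵥ v = 1} =>
      (v : Fin d → ℝ) ⬝ᵥ (A *ᵥ (v : Fin d → ℝ))) := by
    refine ⟨0, ?_⟩
    rintro _ ⟨⟨w, hw⟩, rfl⟩
    have hw0 : w ≠ 0 := by rintro rfl; simp at hw
    have := hA.re_dotProduct_pos (𝕜 := ℝ) hw0
    simpa using this.le
  rcases eq_or_ne v 0 with rfl | hv
  · simp
  · have hvv : 0 < v ⬝ᵥ v := (dp_self_nonneg v).lt_of_ne' (fun h => hv (dotProduct_self_eq_zero.mp h))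
    set t := l2norm v with ht
    have htpos : 0 < t := Real.sqrt_pos.mpr hvv
    have ht2 : t ^ 2 = v ⬝ᵥ v := l2norm_sq v
    set u : Fin d → ℝ := t⁻¹ • v with hu
    have huu : u ⬝ᵥ u = 1 := by
      rw [hu, smul_dotProduct, dotProduct_smul, smul_eq_mul, smul_eq_mul, ← mul_assoc, ← ht2]
      rw [pow_two]; field_simp
    have hle : minEig A ≤ u ⬝ᵥ (A *ᵥ u) := ciInf_le hbdd (⟨u, huu⟩ : {v : Fin d → ℝ // v ⬝ᵥ v = 1})
    have hcalc : u ⬝ᵥ (A *ᵥ u) = (v ⬝ᵥ (A *ᵥ v)) / (t ^ 2) := by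
      rw [hu, mulVec_smul, smul_dotProduct, dotProduct_smul, smul_eq_mul, smul_eq_mul, ← mul_assoc]
      rw [eq_div_iff (by positivity), pow_two]
      field_simp
    rw [hcalc] at hle
    rw [← ht2]
    calc minEig A * t ^ 2 ≤ ((v ⬝ᵥ (A *ᵥ v)) / t ^ 2) * t ^ 2 := by
          exact mul_le_mul_of_nonneg_right hle (sq_nonneg t)
      _ = v ⬝ᵥ (A *ᵥ v) := by field_simp

lemma inv_quad_le {d : ℕ} {A : Matrix (Fin d) (Fin d) ℝ} (hA : A.PosDef) {lam : ℝ}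
    (hlam : 0 < lam) (hq : ∀ v : Fin d → ℝ, lam * (v ⬝ᵥ v) ≤ v ⬝ᵥ (A *ᵥ v)) (u : Fin d → ℝ) :
    u ⬝ᵥ (A⁻¹ *ᵥ u) ≤ (u ⬝ᵥ u) / lam := by
  set y := A⁻¹ *ᵥ u with hy
  have hAy : A *ᵥ y = u := by
    rw [hy, mulVec_mulVec, Matrix.mul_nonsing_inv A hA.det_pos.ne'.isUnit, one_mulVec]
  have huy : u ⬝ᵥ y = y ⬝ᵥ (A *ᵥ y) := by rw [hAy, dotProduct_comm]
  have h1 : lam * (y ⬝ᵥ y) ≤ u ⬝ᵥ y := huy ▸ hq y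
  have h2 : (u ⬝ᵥ y) ^ 2 ≤ (u ⬝ᵥ u) * (y ⬝ᵥ y) := by
    have := cauchy_schwarz u y
    have h3 : (u ⬝ᵥ y) ^ 2 ≤ (l2norm u * l2norm y) ^ 2 := by
      rw [← Real.sqrt_sq_eq_abs] at this
      nlinarith [Real.sqrt_nonneg ((u ⬝ᵥ y)^2), Real.sq_sqrt (sq_nonneg (u ⬝ᵥ y)),
        mul_nonneg (l2norm_nonneg u) (l2norm_nonneg y)]
    calc (u ⬝ᵥ y) ^ 2 ≤ (l2norm u * l2norm y) ^ 2 := h3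
      _ = (u ⬝ᵥ u) * (y ⬝ᵥ y) := by rw [mul_pow, l2norm_sq, l2norm_sq]
  have huy0 : 0 ≤ u ⬝ᵥ y := le_trans (mul_nonneg hlam.le (dp_self_nonneg y)) h1
  rcases eq_or_ne (y ⬝ᵥ y) 0 with hyy | hyy
  · have : y = 0 := dotProduct_self_eq_zero.mp hyy
    rw [this, dotProduct_zero]
    exact div_nonneg (dp_self_nonneg u) hlam.le
  · have hyy' : 0 < y ⬝ᵥ y := (dp_self_nonneg y).lt_of_ne' hyy
    rw [le_div_iff₀ hlam]
    nlinarith [h2, mul_le_mul_of_nonneg_right h1 huy0]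

lemma abs_log_le_of_close {ν x : ℝ} (hx0 : 0 ≤ x) (hx1 : x < 1) (h : |ν - 1| ≤ x) :
    |Real.log ν| ≤ x / (1 - x) := by
  rw [abs_le] at h
  have hν : 1 - x ≤ ν := by linarith
  have hνpos : 0 < ν := lt_of_lt_of_le (by linarith) hν
  have hx1' : 0 < 1 - x := by linarith
  rw [abs_le]
  constructor
  · have hlogi : Real.log ν⁻¹ ≤ ν⁻¹ - 1 := Real.log_le_sub_one_of_pos (inv_pos.mpr hνpos)
    rw [Real.log_inv] at hlogi
    have hinv : ν⁻¹ ≤ (1 - x)⁻¹ := by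
      apply inv_anti₀ hx1' hν
    have : (1 - x)⁻¹ - 1 = x / (1 - x) := by field_simp; ring
    linarith
  · have hlog : Real.log ν ≤ ν - 1 := Real.log_le_sub_one_of_pos hνpos
    have : x ≤ x / (1 - x) := by
      rw [le_div_iff₀ hx1']
      nlinarith
    linarith

lemma eig_rayleigh {d : ℕ} (M : Matrix (Fin d) (Fin d) ℝ) (hM : M.IsHermitian) (i : Fin d) :
    hM.eigenvalues i = ⇑(hM.eigenvectorBasis i) ⬝ᵥ (M *ᵥ ⇑(hM.eigenvectorBasis i)) := by
  simpa using hM.eigenvalues_eq i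

lemma eigvec_unit {d : ℕ} (M : Matrix (Fin d) (Fin d) ℝ) (hM : M.IsHermitian) (i : Fin d) :
    (⇑(hM.eigenvectorBasis i) : Fin d → ℝ) ⬝ᵥ ⇑(hM.eigenvectorBasis i) = 1 := by
  have h := hM.eigenvectorBasis.orthonormal.1 i
  have h2 : (inner (𝕜 := ℝ) (hM.eigenvectorBasis i) (hM.eigenvectorBasis i)) = (1:ℝ) := by
    rw [real_inner_self_eq_norm_mul_norm, h]; ring
  rw [← h2, PiLp.inner_apply]
  simp [dotProduct]
  simp [pow_two]

open scoped MatrixOrder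

theorem stmt9 {d : ℕ} (A B : Matrix (Fin d) (Fin d) ℝ)
    (hA : A.PosDef) (hB : B.PosDef) (h : opNorm (B - A) < minEig A) :
    |Real.log A.det - Real.log B.det| ≤
      d * opNorm (B - A) / (minEig A - opNorm (B - A)) := by
  set E := B - A with hE
  set eps := opNorm (B - A) with heps
  set lam := minEig A with hlam
  have heps0 : 0 ≤ eps := opNorm_nonneg _
  have hlam0 : 0 < lam := lt_of_le_of_lt heps0 h
  -- S = sqrt of A⁻¹
  have hAinv : (A⁻¹).PosDef := hA.inv
  set S := CFC.sqrt (A⁻¹) with hS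
  have hSS : S * S = A⁻¹ := CFC.sqrt_mul_sqrt_self (A⁻¹) hAinv.posSemidef.nonneg
  have hSherm : S.IsHermitian := (Matrix.nonneg_iff_posSemidef.mp (CFC.sqrt_nonneg _)).isHermitian
  have hdetS : S.det * S.det = (A⁻¹).det := by rw [← det_mul, hSS]
  have hAinvdet : 0 < (A⁻¹).det := hAinv.det_pos
  have hSdet : IsUnit S.det := by
    refine isUnit_iff_ne_zero.mpr fun h0 => ?_
    rw [h0, mul_zero] at hdetS; exact hAinvdet.ne hdetS
  have hSAS : S * A * S = 1 := by
    have hA' : A = S⁻¹ * S⁻¹ := by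
      rw [← Matrix.mul_inv_rev, hSS, Matrix.nonsing_inv_nonsing_inv A hA.det_pos.ne'.isUnit]
    rw [hA', Matrix.mul_assoc, Matrix.mul_assoc, Matrix.nonsing_inv_mul S hSdet, Matrix.mul_one,
      Matrix.mul_nonsing_inv S hSdet]
  set M := S * B * S with hM
  have hMherm : M.IsHermitian := by
    have := Matrix.isHermitian_conjTranspose_mul_mul S hB.isHermitian
    rwa [hSherm.eq] at this
  set ν := hMherm.eigenvalues with hν
  have hST : Sᵀ = S := by
    have := hSherm.eq
    rwa [conjTranspose_eq_transpose_of_trivial] at this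
  -- each eigenvalue is close to 1
  have hclose : ∀ i, |ν i - 1| ≤ eps / lam := by
    intro i
    set u : Fin d → ℝ := ⇑(hMherm.eigenvectorBasis i) with hu
    have huu : u ⬝ᵥ u = 1 := eigvec_unit M hMherm i
    set w : Fin d → ℝ := S *ᵥ u with hw
    have hray : ν i = u ⬝ᵥ (M *ᵥ u) := eig_rayleigh M hMherm i
    have hdp : ∀ (C : Matrix (Fin d) (Fin d) ℝ) (x : Fin d → ℝ),
        u ⬝ᵥ (S *ᵥ x) = (S *ᵥ u) ⬝ᵥ x := by
      intro C x
      rw [dotProduct_mulVec, ← Matrix.mulVec_transpose, hST]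
    have hMu : u ⬝ᵥ (M *ᵥ u) = w ⬝ᵥ (B *ᵥ w) := by
      rw [hM, ← mulVec_mulVec, ← mulVec_mulVec, hdp 1, hw]
    have hAw : w ⬝ᵥ (A *ᵥ w) = 1 := by
      rw [hw, ← hdp 1 (A *ᵥ (S *ᵥ u)), mulVec_mulVec, mulVec_mulVec, hSAS, one_mulVec, huu]
    have hww : w ⬝ᵥ w ≤ 1 / lam := by
      have : w ⬝ᵥ w = u ⬝ᵥ (A⁻¹ *ᵥ u) := by
        rw [hw, ← hdp 1 (S *ᵥ u), mulVec_mulVec, hSS]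
      rw [this]
      have := inv_quad_le hA hlam0 (fun v => minEig_le_quad hA v) u
      rwa [huu] at this
    have hBw : w ⬝ᵥ (B *ᵥ w) = 1 + w ⬝ᵥ (E *ᵥ w) := by
      have : B = A + E := by rw [hE]; abel
      rw [this, add_mulVec, dotProduct_add, hAw]
    have hEbound : |w ⬝ᵥ (E *ᵥ w)| ≤ eps / lam := by
      calc |w ⬝ᵥ (E *ᵥ w)| ≤ opNorm E * (w ⬝ᵥ w) := quad_abs_le E w
        _ ≤ eps * (1 / lam) := by
            apply mul_le_mul_of_nonneg_left hww heps0
        _ = eps / lam := by ring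
    rw [hray, hMu, hBw]
    simpa using hEbound
  have hxlt : eps / lam < 1 := (div_lt_one hlam0).mpr h
  have hx0 : 0 ≤ eps / lam := div_nonneg heps0 hlam0.le
  have hνpos : ∀ i, 0 < ν i := by
    intro i
    have := hclose i
    rw [abs_le] at this
    linarith [this.1]
  -- determinant computations
  have hdetM : M.det = (A.det)⁻¹ * B.det := by
    rw [Matrix.det_nonsing_inv, Ring.inverse_eq_inv] at hdetS
    rw [hM, det_mul, det_mul]
    linear_combination B.det * hdetS
  have hdetM' : M.det = ∏ i, ν i := by simpa using hMherm.det_eq_prod_eigenvalues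
  have hlogM : Real.log M.det = Real.log B.det - Real.log A.det := by
    rw [hdetM, Real.log_mul (inv_ne_zero hA.det_pos.ne') hB.det_pos.ne', Real.log_inv]
    ring
  have hlogsum : Real.log M.det = ∑ i, Real.log (ν i) := by
    rw [hdetM']
    exact Real.log_prod fun i _ => (hνpos i).ne'
  have key : |Real.log A.det - Real.log B.det| ≤ d * (eps / lam / (1 - eps / lam)) := by
    have h1 : |Real.log A.det - Real.log B.det| = |∑ i, Real.log (ν i)| := by
      rw [← hlogsum, hlogM, abs_sub_comm]
    rw [h1]
    calc |∑ i, Real.log (ν i)| ≤ ∑ i, |Real.log (ν i)| := Finset.abs_sum_le_sum_abs _ _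
      _ ≤ ∑ _i : Fin d, (eps / lam / (1 - eps / lam)) :=
          Finset.sum_le_sum fun i _ => abs_log_le_of_close hx0 hxlt (hclose i)
      _ = d * (eps / lam / (1 - eps / lam)) := by
          rw [Finset.sum_const, Finset.card_univ, Fintype.card_fin, nsmul_eq_mul]
  have hfinal : (d : ℝ) * (eps / lam / (1 - eps / lam)) = d * eps / (lam - eps) := by
    have h2 : lam - eps ≠ 0 := sub_ne_zero.mpr (ne_of_gt h)
    have h3 : 1 - eps / lam ≠ 0 := by
      have : 0 < 1 - eps / lam := by linarith [hxlt]
      exact ne_of_gt this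
    field_simp
  rw [← hfinal]
  exact key
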